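/- Assume A, B, D have real entries with A = Aᵀ and D = Dᵀ. Let z ∈ ℂ with |z| = 1, and suppose (z+z⁻¹)·1_M − D, Q(z), Q(z⁻¹), γ(z) and γ(z⁻¹) are all invertible. Then for all indices 1 ≤ u, v ≤ M: (Ψ(z)·Ψ(z)†)_{u v} = ((z² − 1)·γ(z)⁻¹ + (z⁻² − 1)·γ(z⁻¹)⁻¹)_{N+u, N+v}. -/

import Mathlib

open Matrix

/-- `F(z) := A + B† ((z+z⁻¹)·1_M − D)⁻¹ B`. -/
noncomputable def Fmat {N M : ℕ} (A : Matrix (Fin N) (Fin N) ℂ)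
    (B : Matrix (Fin M) (Fin N) ℂ) (D : Matrix (Fin M) (Fin M) ℂ) (z : ℂ) :
    Matrix (Fin N) (Fin N) ℂ :=
  A + Bᴴ * ((z + z⁻¹) • (1 : Matrix (Fin M) (Fin M) ℂ) - D)⁻¹ * B

/-- `Q(z) := 1_N − z·F(z)`. -/
noncomputable def Qmat {N M : ℕ} (A : Matrix (Fin N) (Fin N) ℂ)
    (B : Matrix (Fin M) (Fin N) ℂ) (D : Matrix (Fin M) (Fin M) ℂ) (z : ℂ) :
    Matrix (Fin N) (Fin N) ℂ :=
  1 - z • Fmat A B D z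

/-- `𝕊(z) := −Q(z⁻¹)·Q(z)⁻¹`. -/
noncomputable def Smat {N M : ℕ} (A : Matrix (Fin N) (Fin N) ℂ)
    (B : Matrix (Fin M) (Fin N) ℂ) (D : Matrix (Fin M) (Fin M) ℂ) (z : ℂ) :
    Matrix (Fin N) (Fin N) ℂ :=
  -(Qmat A B D z⁻¹) * (Qmat A B D z)⁻¹

/-- `Ψ(z) := ((z+z⁻¹)·1_M − D)⁻¹·B·(z⁻¹·1_N + z·𝕊(z))`. -/
noncomputable def PsiMat {N M : ℕ} (A : Matrix (Fin N) (Fin N) ℂ)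
    (B : Matrix (Fin M) (Fin N) ℂ) (D : Matrix (Fin M) (Fin M) ℂ) (z : ℂ) :
    Matrix (Fin M) (Fin N) ℂ :=
  ((z + z⁻¹) • (1 : Matrix (Fin M) (Fin M) ℂ) - D)⁻¹ * B *
    (z⁻¹ • (1 : Matrix (Fin N) (Fin N) ℂ) + z • Smat A B D z)

/-- `H_G := [[A, B†],[B, D]]`. -/
def HGmat {N M : ℕ} (A : Matrix (Fin N) (Fin N) ℂ)
    (B : Matrix (Fin M) (Fin N) ℂ) (D : Matrix (Fin M) (Fin M) ℂ) :
    Matrix (Fin N ⊕ Fin M) (Fin N ⊕ Fin M) ℂ :=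
  fromBlocks A Bᴴ B D

/-- `P_M`, the diagonal projection onto the last `M` coordinates. -/
def PMmat (N M : ℕ) : Matrix (Fin N ⊕ Fin M) (Fin N ⊕ Fin M) ℂ :=
  fromBlocks 0 0 0 1

/-- `P_N := 1 − P_M`, the diagonal projection onto the first `N` coordinates. -/
def PNmat (N M : ℕ) : Matrix (Fin N ⊕ Fin M) (Fin N ⊕ Fin M) ℂ :=
  1 - PMmat N M

/-- `γ(z) := −z²·P_M + z·H_G − 1`. -/
noncomputable def gammaMat {N M : ℕ} (A : Matrix (Fin N) (Fin N) ℂ)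
    (B : Matrix (Fin M) (Fin N) ℂ) (D : Matrix (Fin M) (Fin M) ℂ) (z : ℂ) :
    Matrix (Fin N ⊕ Fin M) (Fin N ⊕ Fin M) ℂ :=
  -(z ^ 2) • PMmat N M + z • HGmat A B D - 1


lemma gamma_blocks {N M : ℕ} (A : Matrix (Fin N) (Fin N) ℂ) (B : Matrix (Fin M) (Fin N) ℂ)
    (D : Matrix (Fin M) (Fin M) ℂ) (w : ℂ) :
    gammaMat A B D w =
      fromBlocks (w • A - 1) (w • Bᴴ) (w • B) (w • D - (1 + w ^ 2) • 1) := by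
  unfold gammaMat PMmat HGmat
  rw [← fromBlocks_one, fromBlocks_smul, fromBlocks_smul, fromBlocks_add, sub_eq_add_neg,
    fromBlocks_neg, fromBlocks_add]
  rw [fromBlocks_inj]
  refine ⟨by module, by module, by module, by module⟩

lemma gamma_inv_inr {N M : ℕ} (A : Matrix (Fin N) (Fin N) ℂ) (B : Matrix (Fin M) (Fin N) ℂ)
    (D : Matrix (Fin M) (Fin M) ℂ) (w : ℂ) (hw : w ≠ 0)
    (hD : IsUnit ((w + w⁻¹) • (1 : Matrix (Fin M) (Fin M) ℂ) - D))
    (hQ : IsUnit (Qmat A B D w)) :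
    (gammaMat A B D w)⁻¹.toBlocks₂₂ =
      (-w⁻¹) • ((w + w⁻¹) • (1 : Matrix (Fin M) (Fin M) ℂ) - D)⁻¹
        - ((w + w⁻¹) • 1 - D)⁻¹ * B * (Qmat A B D w)⁻¹ * Bᴴ *
            ((w + w⁻¹) • 1 - D)⁻¹ := by
  set E : Matrix (Fin M) (Fin M) ℂ := (w + w⁻¹) • 1 - D with hE
  set R : Matrix (Fin M) (Fin M) ℂ := E⁻¹ with hR
  set Qm : Matrix (Fin N) (Fin N) ℂ := Qmat A B D w with hQm
  set q : Matrix (Fin N) (Fin N) ℂ := Qm⁻¹ with hq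
  have hER : E * R = 1 := mul_nonsing_inv E ((isUnit_iff_isUnit_det E).mp hD)
  have hQq : Qm * q = 1 := mul_nonsing_inv Qm ((isUnit_iff_isUnit_det Qm).mp hQ)
  set d' : Matrix (Fin M) (Fin M) ℂ := (-w⁻¹) • R with hd'
  set b : Matrix (Fin N) (Fin M) ℂ := w • Bᴴ with hb
  set c : Matrix (Fin M) (Fin N) ℂ := w • B with hc
  have hd : w • D - (1 + w ^ 2) • (1 : Matrix (Fin M) (Fin M) ℂ) = (-w) • E := by
    rw [hE, smul_sub, smul_smul, show -w * (w + w⁻¹) = -(1 + w ^ 2) by field_simp; ring]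
    module
  have hQq' : ∀ X : Matrix (Fin N) (Fin M) ℂ, Qm * (q * X) = X := by
    intro X; rw [← Matrix.mul_assoc, hQq, Matrix.one_mul]
  have hdd1 : (-w) • E * d' = 1 := by
    rw [hd', smul_mul_smul_comm, show -w * -w⁻¹ = 1 by field_simp, one_smul, hER]
  have hdd' : ∀ X : Matrix (Fin M) (Fin N) ℂ, (-w) • E * (d' * X) = X := by
    intro X; rw [← Matrix.mul_assoc, hdd1, Matrix.one_mul]
  have hdd'2 : ∀ X : Matrix (Fin M) (Fin M) ℂ, (-w) • E * (d' * X) = X := by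
    intro X; rw [← Matrix.mul_assoc, hdd1, Matrix.one_mul]
  have ha : w • A - (1 : Matrix (Fin N) (Fin N) ℂ) = b * (d' * c) - Qm := by
    rw [hQm, Qmat, Fmat, hb, hc, hd', ← hE, ← hR]
    simp only [Matrix.mul_smul, Matrix.smul_mul, smul_smul, Matrix.mul_assoc, smul_add]
    match_scalars <;> field_simp <;> ring
  have hX : gammaMat A B D w * (fromBlocks (-q) (q * (b * d')) (d' * (c * q))
      (d' - d' * (c * (q * (b * d'))))) = 1 := by
    rw [gamma_blocks, hd, fromBlocks_multiply, ← fromBlocks_one]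
    rw [fromBlocks_inj]
    refine ⟨?_, ?_, ?_, ?_⟩
    · rw [show (w • A - 1 : Matrix (Fin N) (Fin N) ℂ) = b * (d' * c) - Qm from ha]
      simp only [Matrix.sub_mul, Matrix.mul_neg, Matrix.neg_mul, Matrix.mul_assoc, neg_sub,
        neg_neg, Matrix.mul_sub]
      rw [hQq]
      abel
    · rw [show (w • A - 1 : Matrix (Fin N) (Fin N) ℂ) = b * (d' * c) - Qm from ha]
      simp only [Matrix.sub_mul, Matrix.mul_neg, Matrix.neg_mul, Matrix.mul_assoc, neg_sub,
        neg_neg, Matrix.mul_sub]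
      rw [hQq' (b * d')]
      abel
    · simp only [Matrix.mul_neg, Matrix.mul_assoc, Matrix.mul_sub]
      rw [show (-w) • E * (d' * (c * q)) = c * q from hdd' _]
      abel
    · simp only [Matrix.mul_neg, Matrix.mul_assoc, Matrix.mul_sub]
      rw [show (-w) • E * (d' * (c * (q * (b * d')))) = c * (q * (b * d')) from hdd'2 _,
        show ((-w) • E) * d' = 1 from hdd1]
      abel
  rw [Matrix.inv_eq_right_inv hX]
  show d' - d' * (c * (q * (b * d'))) = (-w⁻¹) • R - R * B * q * Bᴴ * R
  rw [hd', hb, hc]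
  simp only [Matrix.mul_smul, Matrix.smul_mul, smul_smul, Matrix.mul_assoc]
  match_scalars <;> field_simp

/-- for real symmetric data and `|z| = 1`, the internal-vertex matrix
elements of `Ψ(z)·Ψ(z)†` equal those of `(z² − 1)·γ(z)⁻¹ + (z⁻² − 1)·γ(z⁻¹)⁻¹`. -/
theorem PsiPsiDagger_gamma_sum {N M : ℕ} (hN : 0 < N) (hM : 0 < M)
    (A : Matrix (Fin N) (Fin N) ℂ) (B : Matrix (Fin M) (Fin N) ℂ)
    (D : Matrix (Fin M) (Fin M) ℂ)
    (hAre : ∀ i j, (A i j).im = 0) (hBre : ∀ i j, (B i j).im = 0)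
    (hDre : ∀ i j, (D i j).im = 0)
    (hAsym : Aᵀ = A) (hDsym : Dᵀ = D)
    (z : ℂ) (habs : ‖z‖ = 1)
    (hD : IsUnit ((z + z⁻¹) • (1 : Matrix (Fin M) (Fin M) ℂ) - D))
    (hQ : IsUnit (Qmat A B D z)) (hQ' : IsUnit (Qmat A B D z⁻¹))
    (hγ : IsUnit (gammaMat A B D z)) (hγ' : IsUnit (gammaMat A B D z⁻¹)) :
    ∀ u v : Fin M,
      (PsiMat A B D z * (PsiMat A B D z)ᴴ) u v =
        ((z ^ 2 - 1) • (gammaMat A B D z)⁻¹ +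
            ((z ^ 2)⁻¹ - 1) • (gammaMat A B D z⁻¹)⁻¹)
          (Sum.inr u) (Sum.inr v) := by
  have hz : z ≠ 0 := by
    intro h; rw [h] at habs; simp at habs
  have hzc : (starRingEnd ℂ) z = z⁻¹ := by
    have h1 : z * (starRingEnd ℂ) z = 1 := by
      rw [Complex.mul_conj, ← Complex.sq_norm, habs]; norm_num
    exact (inv_eq_of_mul_eq_one_right h1).symm
  have hzc' : (starRingEnd ℂ) z⁻¹ = z := by
    rw [map_inv₀, hzc, inv_inv]
  have hAH : Aᴴ = A := by
    ext i j
    rw [Matrix.conjTranspose_apply, Complex.star_def, Complex.conj_eq_iff_im.mpr (hAre j i)]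
    show A j i = A i j
    conv_rhs => rw [← hAsym]
    rw [Matrix.transpose_apply]
  have hDH : Dᴴ = D := by
    ext i j
    rw [Matrix.conjTranspose_apply, Complex.star_def, Complex.conj_eq_iff_im.mpr (hDre j i)]
    show D j i = D i j
    conv_rhs => rw [← hDsym]
    rw [Matrix.transpose_apply]
  set E : Matrix (Fin M) (Fin M) ℂ := (z + z⁻¹) • 1 - D with hE
  set R : Matrix (Fin M) (Fin M) ℂ := E⁻¹ with hR
  have hEH : Eᴴ = E := by
    rw [hE, conjTranspose_sub, conjTranspose_smul, conjTranspose_one, hDH]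
    rw [show star (z + z⁻¹) = z⁻¹ + z from by
      rw [star_add]; simp only [Complex.star_def, hzc, hzc']]
    rw [add_comm z⁻¹ z]
  have hRH : Rᴴ = R := by rw [hR, conjTranspose_nonsing_inv, hEH]
  have hFz : Fmat A B D z⁻¹ = Fmat A B D z := by
    unfold Fmat; rw [inv_inv, add_comm z⁻¹ z]
  have hFH : (Fmat A B D z)ᴴ = Fmat A B D z := by
    unfold Fmat
    rw [← hE, ← hR]
    simp only [conjTranspose_add, conjTranspose_mul, conjTranspose_conjTranspose, hAH, hRH,
      Matrix.mul_assoc]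
  have hQH : (Qmat A B D z)ᴴ = Qmat A B D z⁻¹ := by
    unfold Qmat
    rw [conjTranspose_sub, conjTranspose_one, conjTranspose_smul, hFH, hFz,
      Complex.star_def, hzc]
  set Q : Matrix (Fin N) (Fin N) ℂ := Qmat A B D z with hQdef
  set Q' : Matrix (Fin N) (Fin N) ℂ := Qmat A B D z⁻¹ with hQ'def
  set q : Matrix (Fin N) (Fin N) ℂ := Q⁻¹ with hqdef
  set q' : Matrix (Fin N) (Fin N) ℂ := Q'⁻¹ with hq'def
  have hQq : Q * q = 1 := mul_nonsing_inv Q ((isUnit_iff_isUnit_det Q).mp hQ)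
  have hqQ : q * Q = 1 := nonsing_inv_mul Q ((isUnit_iff_isUnit_det Q).mp hQ)
  have hQ'q' : Q' * q' = 1 := mul_nonsing_inv Q' ((isUnit_iff_isUnit_det Q').mp hQ')
  have hqH : qᴴ = q' := by rw [hqdef, conjTranspose_nonsing_inv, hQH]
  have h1 : z⁻¹ • Q - z • Q' = (z⁻¹ - z) • (1 : Matrix (Fin N) (Fin N) ℂ) := by
    rw [hQdef, hQ'def]; unfold Qmat; rw [hFz]
    match_scalars <;> field_simp <;> ring
  have hT : z⁻¹ • (1 : Matrix (Fin N) (Fin N) ℂ) + z • Smat A B D z = (z⁻¹ - z) • q := by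
    calc z⁻¹ • (1 : Matrix (Fin N) (Fin N) ℂ) + z • Smat A B D z
        = z⁻¹ • (Q * q) + z • (-(Q' * q)) := by
          rw [hQq]; unfold Smat; rw [Matrix.neg_mul, ← hQ'def, ← hqdef]
      _ = (z⁻¹ • Q - z • Q') * q := by
          rw [Matrix.sub_mul, Matrix.smul_mul, Matrix.smul_mul, smul_neg, sub_eq_add_neg]
      _ = ((z⁻¹ - z) • (1 : Matrix (Fin N) (Fin N) ℂ)) * q := by rw [h1]
      _ = (z⁻¹ - z) • q := by rw [Matrix.smul_mul, Matrix.one_mul]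
  have hPsi : PsiMat A B D z = (z⁻¹ - z) • (R * B * q) := by
    unfold PsiMat
    rw [← hE, ← hR, hT, Matrix.mul_smul]
  have hPsiH : (PsiMat A B D z)ᴴ = (z - z⁻¹) • (q' * (Bᴴ * R)) := by
    rw [hPsi, conjTranspose_smul, conjTranspose_mul, conjTranspose_mul, hqH, hRH,
      show star (z⁻¹ - z) = z - z⁻¹ from by
        rw [star_sub]; simp only [Complex.star_def, hzc, hzc']]
  have h2 : (1 - z ^ 2) • Q' + (1 - (z ^ 2)⁻¹) • Q
      = ((z⁻¹ - z) * (z - z⁻¹)) • (1 : Matrix (Fin N) (Fin N) ℂ) := by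
    rw [hQdef, hQ'def]; unfold Qmat; rw [hFz]
    match_scalars <;> field_simp <;> ring
  have hmid : ((z⁻¹ - z) * (z - z⁻¹)) • (q * q')
      = (1 - z ^ 2) • q + (1 - (z ^ 2)⁻¹) • q' := by
    calc ((z⁻¹ - z) * (z - z⁻¹)) • (q * q')
        = q * (((z⁻¹ - z) * (z - z⁻¹)) • (1 : Matrix (Fin N) (Fin N) ℂ)) * q' := by
          rw [Matrix.mul_smul, Matrix.mul_one, Matrix.smul_mul]
      _ = q * ((1 - z ^ 2) • Q' + (1 - (z ^ 2)⁻¹) • Q) * q' := by rw [h2]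
      _ = (1 - z ^ 2) • q + (1 - (z ^ 2)⁻¹) • q' := by
          rw [Matrix.mul_add, Matrix.add_mul, Matrix.mul_smul, Matrix.smul_mul,
            Matrix.mul_smul, Matrix.smul_mul, Matrix.mul_assoc, hQ'q', Matrix.mul_one,
            hqQ, Matrix.one_mul]
  have main : PsiMat A B D z * (PsiMat A B D z)ᴴ
      = (z ^ 2 - 1) • ((-z⁻¹) • R - R * B * q * Bᴴ * R)
        + ((z ^ 2)⁻¹ - 1) • ((-z) • R - R * B * q' * Bᴴ * R) := by
    rw [hPsiH, hPsi, Matrix.smul_mul, Matrix.mul_smul, smul_smul]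
    rw [show (R * B * q) * (q' * (Bᴴ * R)) = (R * B) * (q * q') * (Bᴴ * R) from by
      simp only [Matrix.mul_assoc]]
    rw [← Matrix.smul_mul, ← Matrix.mul_smul, hmid]
    simp only [Matrix.mul_add, Matrix.add_mul, Matrix.mul_smul, Matrix.smul_mul, smul_sub,
      smul_smul, Matrix.mul_assoc]
    match_scalars <;> field_simp <;> ring
  have hD2 : IsUnit ((z⁻¹ + (z⁻¹)⁻¹) • (1 : Matrix (Fin M) (Fin M) ℂ) - D) := by
    rw [inv_inv, add_comm z⁻¹ z]; exact hD
  have g1 := gamma_inv_inr A B D z hz hD hQ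
  have g2 := gamma_inv_inr A B D z⁻¹ (inv_ne_zero hz) hD2 hQ'
  rw [inv_inv, add_comm z⁻¹ z] at g2
  rw [← hE, ← hR, ← hQdef, ← hqdef] at g1
  rw [← hE, ← hR, ← hQ'def, ← hq'def] at g2
  intro u v
  have e1 : (gammaMat A B D z)⁻¹ (Sum.inr u) (Sum.inr v)
      = (gammaMat A B D z)⁻¹.toBlocks₂₂ u v := rfl
  have e2 : (gammaMat A B D z⁻¹)⁻¹ (Sum.inr u) (Sum.inr v)
      = (gammaMat A B D z⁻¹)⁻¹.toBlocks₂₂ u v := rfl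
  rw [Matrix.add_apply, Matrix.smul_apply, Matrix.smul_apply, e1, e2, g1, g2, main,
    Matrix.add_apply, Matrix.smul_apply, Matrix.smul_apply]
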